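/- Under the same setup, define for each integer q ≥ 1 the bilinear map r^q_ρ(u,v) := (-1/4)^q Σ_{l_1,...,l_{q-1}} π_ρ([u,e_{l_1}]) π_ρ([e_{l_1},e_{l_2}]) ⋯ π_ρ([e_{l_{q-1}},v]) ∈ End(V_ρ), with r^0_ρ(u,v) := ⟨u,v⟩·Id. Then for every q ≥ 0 and all u,v ∈ R^n: Σ_k m(λ_k)^q (p_{λ_k}(u))* p_{λ_k}(v) = r^q_ρ(u,v). -/

import Mathlib

open scoped RealInnerProductSpace

/-- The bilinear maps `r^q_ρ(u,v) := (-1/4)^q Σ_{l₁,…,l_{q-1}}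
π([u,e_{l₁}]) π([e_{l₁},e_{l₂}]) ⋯ π([e_{l_{q-1}},v])`, with
`r^0_ρ(u,v) = ⟪u,v⟫·Id`, defined by the equivalent recursion
`r^{q+1}(u,v) = Σ_l r^q(u, e_l) ∘ (-(1/4) π([e_l, v]))`. -/
noncomputable def cliffordR {n : ℕ} {V : Type*} [AddCommGroup V] [Module ℝ V]
    (π : EuclideanSpace ℝ (Fin n) →ₗ[ℝ] EuclideanSpace ℝ (Fin n) →ₗ[ℝ] Module.End ℝ V)
    (b : OrthonormalBasis (Fin n) ℝ (EuclideanSpace ℝ (Fin n))) :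
    ℕ → EuclideanSpace ℝ (Fin n) → EuclideanSpace ℝ (Fin n) → Module.End ℝ V
  | 0 => fun u v => ⟪u, v⟫ • (1 : Module.End ℝ V)
  | (q + 1) => fun u v => ∑ l, cliffordR π b q u (b l) * ((-(4⁻¹ : ℝ)) • π (b l) v)

/-- Under the same setup (completeness relation and eigenvector relation for
the Clifford homomorphisms `p_{λ_k}(u) = Pr k ∘ ι.flip u`, conformal weights `m k`),
for every `q ≥ 0` and all `u, v ∈ ℝⁿ`:
`Σ_k (m k)^q • (p_{λ_k}(u))* ∘ p_{λ_k}(v) = r^q_ρ(u,v)`. -/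
theorem clifford_hom_power_sum {n N : ℕ} {V E : Type*}
    [NormedAddCommGroup V] [InnerProductSpace ℝ V] [FiniteDimensional ℝ V]
    [NormedAddCommGroup E] [InnerProductSpace ℝ E] [FiniteDimensional ℝ E]
    (ι : V →ₗ[ℝ] EuclideanSpace ℝ (Fin n) →ₗ[ℝ] E)
    (b : OrthonormalBasis (Fin n) ℝ (EuclideanSpace ℝ (Fin n)))
    (π : EuclideanSpace ℝ (Fin n) →ₗ[ℝ] EuclideanSpace ℝ (Fin n) →ₗ[ℝ] Module.End ℝ V)
    (hanti : ∀ u v, π v u = -π u v)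
    (Pr : Fin N → E →ₗ[ℝ] E) (m : Fin N → ℝ)
    (hcomp : ∀ u v : EuclideanSpace ℝ (Fin n),
      ∑ k, (LinearMap.adjoint (Pr k ∘ₗ ι.flip u)) ∘ₗ (Pr k ∘ₗ ι.flip v)
        = ⟪u, v⟫ • (LinearMap.id : V →ₗ[ℝ] V))
    (heig : ∀ k (u : EuclideanSpace ℝ (Fin n)),
      (-(4⁻¹ : ℝ)) • ∑ i, (Pr k ∘ₗ ι.flip (b i)) ∘ₗ (π (b i) u : V →ₗ[ℝ] V)
        = m k • (Pr k ∘ₗ ι.flip u)) :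
    ∀ (q : ℕ) (u v : EuclideanSpace ℝ (Fin n)),
      ∑ k, (m k) ^ q • ((LinearMap.adjoint (Pr k ∘ₗ ι.flip u)) ∘ₗ (Pr k ∘ₗ ι.flip v))
        = (cliffordR π b q u v : V →ₗ[ℝ] V) := by
  intro q
  induction q with
  | zero =>
    intro u v
    simpa [cliffordR, Module.End.one_eq_id] using hcomp u v
  | succ q ih =>
    intro u v
    have step : ∀ k, ∑ l, ((m k) ^ q • ((LinearMap.adjoint (Pr k ∘ₗ ι.flip u)) ∘ₗ
        (Pr k ∘ₗ ι.flip (b l)))) * ((-(4⁻¹ : ℝ)) • π (b l) v)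
        = (m k) ^ (q + 1) • ((LinearMap.adjoint (Pr k ∘ₗ ι.flip u)) ∘ₗ (Pr k ∘ₗ ι.flip v)) := by
      intro k
      have h1 : ∑ l, ((m k) ^ q • ((LinearMap.adjoint (Pr k ∘ₗ ι.flip u)) ∘ₗ
          (Pr k ∘ₗ ι.flip (b l)))) * ((-(4⁻¹ : ℝ)) • π (b l) v)
          = (m k) ^ q • ((LinearMap.adjoint (Pr k ∘ₗ ι.flip u)) ∘ₗ
            ((-(4⁻¹ : ℝ)) • ∑ l, (Pr k ∘ₗ ι.flip (b l)) ∘ₗ (π (b l) v : V →ₗ[ℝ] V))) := by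
        ext x
        simp [mul_comm, Finset.smul_sum, LinearMap.sum_apply, smul_smul]
      rw [h1, heig k v]
      ext x
      simp [pow_succ, smul_smul, mul_comm, mul_assoc, mul_left_comm]
    calc ∑ k, (m k) ^ (q + 1) • ((LinearMap.adjoint (Pr k ∘ₗ ι.flip u)) ∘ₗ (Pr k ∘ₗ ι.flip v))
        = ∑ k, ∑ l, ((m k) ^ q • ((LinearMap.adjoint (Pr k ∘ₗ ι.flip u)) ∘ₗ
            (Pr k ∘ₗ ι.flip (b l)))) * ((-(4⁻¹ : ℝ)) • π (b l) v) := by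
          exact (Finset.sum_congr rfl fun k _ => (step k).symm)
      _ = ∑ l, (∑ k, (m k) ^ q • ((LinearMap.adjoint (Pr k ∘ₗ ι.flip u)) ∘ₗ
            (Pr k ∘ₗ ι.flip (b l)))) * ((-(4⁻¹ : ℝ)) • π (b l) v) := by
          rw [Finset.sum_comm]
          exact Finset.sum_congr rfl fun l _ => (Finset.sum_mul ..).symm
      _ = (cliffordR π b (q + 1) u v : V →ₗ[ℝ] V) := by
          show _ = ∑ l, cliffordR π b q u (b l) * ((-(4⁻¹ : ℝ)) • π (b l) v)
          exact Finset.sum_congr rfl fun l _ => by rw [ih u (b l)]
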